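/- Let n > 3, k = ⌊(n+2)/3⌋ and B = {1, 4, 7, …, 3k−2}. Let W_Cln = (1/2)𝟙 − |Cl_n⟩⟨Cl_n| − (1/2) Σ_s ∏_{i∈B} (s_i g_i + 𝟙)/2 (sum over sign vectors s ∈ {±1}^k with at least two entries −1), and for 0 ≤ p ≤ 1 let ρ(p) = (1−p)|Cl_n⟩⟨Cl_n| + p·2^{−n}𝟙. Then tr(W_Cln · ρ(p)) = −1/2 + p(1/2 − 2^{−n} + (k+1)2^{−k−1}); in particular tr(W_Cln · ρ(p)) < 0 if and only if p < p_tol, where p_tol = (1 − 2^{−n+1} + (k+1)2^{−k})^{−1}. -/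

import Mathlib

open Matrix Finset ComplexOrder

/-- Operators on `(ℂ²)^{⊗n}`, indexed by bit strings `{0,1}^n`. -/
abbrev QMat (n : ℕ) := Matrix (Fin n → Fin 2) (Fin n → Fin 2) ℂ

/-- The tensor product `A 0 ⊗ ⋯ ⊗ A (n-1)` of one-qubit operators. -/
def qtensor {n : ℕ} (A : Fin n → Matrix (Fin 2) (Fin 2) ℂ) : QMat n :=
  fun v w => ∏ a, A a (v a) (w a)

def PX : Matrix (Fin 2) (Fin 2) ℂ := !![0, 1; 1, 0]

def PZ : Matrix (Fin 2) (Fin 2) ℂ := !![1, 0; 0, -1]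

lemma qtensor_mul {n : ℕ} (A B : Fin n → Matrix (Fin 2) (Fin 2) ℂ) :
    qtensor A * qtensor B = qtensor (fun a => A a * B a) := by
  ext v w
  simp only [qtensor, Matrix.mul_apply]
  rw [show (∏ a, ∑ j, A a (v a) j * B a j (w a)) = _ from Fintype.prod_sum _]
  exact Finset.sum_congr rfl fun u _ => by rw [Finset.prod_mul_distrib]

lemma qtensor_one {n : ℕ} : qtensor (fun _ : Fin n => (1 : Matrix (Fin 2) (Fin 2) ℂ)) = 1 := by
  ext v w
  by_cases h : v = w
  · subst h; simp [qtensor, Matrix.one_apply]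
  · rw [qtensor, Matrix.one_apply_ne h]
    obtain ⟨a, ha⟩ := Function.ne_iff.mp h
    exact Finset.prod_eq_zero (Finset.mem_univ a) (Matrix.one_apply_ne ha)

lemma trace_qtensor {n : ℕ} (A : Fin n → Matrix (Fin 2) (Fin 2) ℂ) :
    (qtensor A).trace = ∏ a, (A a).trace := by
  simp only [Matrix.trace, Matrix.diag, qtensor]
  rw [Finset.prod_univ_sum]
  rfl

lemma qtensor_smul_family {n : ℕ} (c : Fin n → ℂ) (A : Fin n → Matrix (Fin 2) (Fin 2) ℂ) :
    qtensor (fun a => c a • A a) = (∏ a, c a) • qtensor A := by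
  ext v w
  simp [qtensor, Finset.prod_mul_distrib, Matrix.smul_apply]


/-- The linear-cluster-state stabilizer generator: `g_1 = X_1 Z_2`,
`g_i = Z_{i-1} X_i Z_{i+1}` for `1 < i < n`, `g_n = Z_{n-1} X_n`. -/
def clGen (n : ℕ) (i : Fin n) : QMat n :=
  qtensor (fun a => if a = i then PX
    else if (a : ℕ) + 1 = (i : ℕ) ∨ (i : ℕ) + 1 = (a : ℕ) then PZ else 1)

/-- local matrix of the generator -/
def locM {n : ℕ} (i : Fin n) : Fin n → Matrix (Fin 2) (Fin 2) ℂ :=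
  fun a => if a = i then PX
    else if (a : ℕ) + 1 = (i : ℕ) ∨ (i : ℕ) + 1 = (a : ℕ) then PZ else 1

lemma clGen_eq {n : ℕ} (i : Fin n) : clGen n i = qtensor (locM i) := rfl

lemma PX_mul_PX : PX * PX = 1 := by
  rw [PX, Matrix.mul_fin_two, Matrix.one_fin_two]; norm_num

lemma PZ_mul_PZ : PZ * PZ = 1 := by
  rw [PZ, Matrix.mul_fin_two, Matrix.one_fin_two]; norm_num

lemma PX_mul_PZ : PX * PZ = (-1 : ℂ) • (PZ * PX) := by
  rw [PX, PZ, Matrix.mul_fin_two, Matrix.mul_fin_two]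
  ext i j; fin_cases i <;> fin_cases j <;> norm_num

lemma trace_PX : PX.trace = 0 := by simp [PX, Matrix.trace_fin_two]

lemma PZ_mul_PX : PZ * PX = (-1 : ℂ) • (PX * PZ) := by
  rw [PX, PZ, Matrix.mul_fin_two, Matrix.mul_fin_two]
  ext i j; fin_cases i <;> fin_cases j <;> norm_num

lemma locM_self {n : ℕ} (i : Fin n) : locM i i = PX := by simp [locM]

lemma locM_of_adj {n : ℕ} (i a : Fin n) (h : (a : ℕ) + 1 = i ∨ (i : ℕ) + 1 = a) :
    locM i a = PZ := by
  have : a ≠ i := by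
    intro he; rw [he] at h; omega
  simp [locM, this, h]

lemma clGen_comm_aux {n : ℕ} (i j : Fin n) (hadj : (i : ℕ) + 1 = (j : ℕ)) :
    clGen n i * clGen n j = clGen n j * clGen n i := by
  rw [clGen_eq, clGen_eq, qtensor_mul, qtensor_mul]
  have hij : i ≠ j := by
    intro h; rw [h] at hadj; omega
  have key : (fun a => locM i a * locM j a)
      = fun a => (if a = i ∨ a = j then (-1 : ℂ) else 1) • (locM j a * locM i a) := by
    funext a
    by_cases h1 : a = i
    · subst h1
      rw [locM_self, locM_of_adj j a (Or.inl hadj), if_pos (Or.inl rfl), PX_mul_PZ]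
    · by_cases h2 : a = j
      · subst h2
        rw [locM_self, locM_of_adj i a (Or.inr hadj), if_pos (Or.inr rfl), PZ_mul_PX]
      · rw [if_neg (by tauto : ¬(a = i ∨ a = j)), one_smul]
        simp only [locM, if_neg h1, if_neg h2]
        split_ifs <;> simp
  rw [key, qtensor_smul_family]
  have hprod : (∏ a, (if a = i ∨ a = j then (-1 : ℂ) else 1)) = 1 := by
    have e : ∀ a : Fin n, (if a = i ∨ a = j then (-1 : ℂ) else 1)
        = (if a = i then (-1 : ℂ) else 1) * (if a = j then (-1 : ℂ) else 1) := by
      intro a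
      by_cases h1 : a = i <;> by_cases h2 : a = j
      · exact absurd (h1.symm.trans h2) hij
      · simp [h1, h2, hij, Ne.symm hij]
      · simp [h1, h2, hij, Ne.symm hij]
      · simp [h1, h2]
    simp only [e, Finset.prod_mul_distrib, Fintype.prod_ite_eq']
    norm_num
  rw [hprod, one_smul]

lemma clGen_comm {n : ℕ} (i j : Fin n) : Commute (clGen n i) (clGen n j) := by
  rcases eq_or_ne i j with rfl | hij
  · exact Commute.refl _
  unfold Commute SemiconjBy
  by_cases h1 : (i : ℕ) + 1 = (j : ℕ)
  · exact clGen_comm_aux i j h1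
  by_cases h2 : (j : ℕ) + 1 = (i : ℕ)
  · exact (clGen_comm_aux j i h2).symm
  rw [clGen_eq, clGen_eq, qtensor_mul, qtensor_mul]
  have key : (fun a => locM i a * locM j a) = fun a => locM j a * locM i a := by
    funext a
    by_cases ha1 : a = i
    · subst ha1
      have : locM j a = 1 := by
        simp only [locM, if_neg (Ne.symm hij)]
        rw [if_neg (by omega : ¬((a : ℕ) + 1 = (j : ℕ) ∨ (j : ℕ) + 1 = (a : ℕ)))]
        exact if_neg hij
      rw [this, locM_self, one_mul, mul_one]
    · by_cases ha2 : a = j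
      · subst ha2
        have : locM i a = 1 := by
          simp only [locM, if_neg hij]
          rw [if_neg (by omega : ¬((a : ℕ) + 1 = (i : ℕ) ∨ (i : ℕ) + 1 = (a : ℕ)))]
          exact if_neg ha1
        rw [this, locM_self, one_mul, mul_one]
      · simp only [locM, if_neg ha1, if_neg ha2]
        split_ifs <;> simp
  rw [key]

lemma clGen_sq {n : ℕ} (i : Fin n) : clGen n i * clGen n i = 1 := by
  rw [clGen_eq, qtensor_mul]
  rw [show (fun a => locM i a * locM i a) = fun _ : Fin n => (1 : Matrix (Fin 2) (Fin 2) ℂ) by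
    funext a; simp only [locM]; split_ifs <;> simp [PX_mul_PX, PZ_mul_PZ]]
  exact qtensor_one

lemma prod_map_qtensor {n : ℕ} (l : List (Fin n))
    (F : Fin n → Fin n → Matrix (Fin 2) (Fin 2) ℂ) :
    (l.map (fun i => qtensor (F i))).prod
      = qtensor (fun a => (l.map (fun i => F i a)).prod) := by
  induction l with
  | nil => simp [qtensor_one.symm]
  | cons h t ih => simp only [List.map_cons, List.prod_cons, ih, qtensor_mul]

def isDiag (M : Matrix (Fin 2) (Fin 2) ℂ) : Prop := M 0 1 = 0 ∧ M 1 0 = 0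

lemma isDiag_one : isDiag 1 := by constructor <;> simp [Matrix.one_apply]

lemma isDiag_PZ : isDiag PZ := by constructor <;> simp [PZ]

lemma isDiag_mul {M N : Matrix (Fin 2) (Fin 2) ℂ} (hM : isDiag M) (hN : isDiag N) :
    isDiag (M * N) := by
  obtain ⟨m1, m2⟩ := hM; obtain ⟨n1, n2⟩ := hN
  constructor <;> simp [Matrix.mul_apply, Fin.sum_univ_two, m1, m2, n1, n2]

lemma isDiag_list_prod {L : List (Matrix (Fin 2) (Fin 2) ℂ)}
    (h : ∀ M ∈ L, isDiag M) : isDiag L.prod := by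
  induction L with
  | nil => simpa using isDiag_one
  | cons M T ih =>
    rw [List.prod_cons]
    exact isDiag_mul (h M (by simp)) (ih fun N hN => h N (by simp [hN]))

lemma trace_diag_PX_diag (D E : Matrix (Fin 2) (Fin 2) ℂ) (hD : isDiag D) (hE : isDiag E) :
    (D * (PX * E)).trace = 0 := by
  obtain ⟨d1, d2⟩ := hD; obtain ⟨e1, e2⟩ := hE
  simp [Matrix.trace_fin_two, Matrix.mul_apply, Fin.sum_univ_two, PX, d1, d2, e1, e2,
    Matrix.vecMul, dotProduct]

lemma isDiag_locM {n : ℕ} {i a : Fin n} (h : a ≠ i) : isDiag (locM i a) := by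
  simp only [locM, if_neg h]
  split_ifs
  · exact isDiag_PZ
  · exact isDiag_one

lemma trace_prod_clGen {n : ℕ} (l : List (Fin n)) (hne : l ≠ []) (hnd : l.Nodup) :
    ((l.map (clGen n)).prod).trace = 0 := by
  obtain ⟨m, hm⟩ := List.exists_mem_of_ne_nil l hne
  obtain ⟨l₁, l₂, rfl⟩ := List.append_of_mem hm
  have hnd' := hnd
  rw [List.nodup_append] at hnd'
  obtain ⟨h1, h2, h3⟩ := hnd'
  have hm1 : m ∉ l₁ := fun hx => h3 m hx m (by simp) rfl
  have hm2 : m ∉ l₂ := (List.nodup_cons.mp h2).1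
  rw [show clGen n = fun i => qtensor (locM i) from rfl]
  rw [prod_map_qtensor, trace_qtensor]
  apply Finset.prod_eq_zero (Finset.mem_univ m)
  rw [List.map_append, List.map_cons, List.prod_append, List.prod_cons, locM_self]
  apply trace_diag_PX_diag
  · apply isDiag_list_prod
    intro M hM
    rw [List.mem_map] at hM
    obtain ⟨j, hj, rfl⟩ := hM
    exact isDiag_locM (fun he => hm1 (he ▸ hj))
  · apply isDiag_list_prod
    intro M hM
    rw [List.mem_map] at hM
    obtain ⟨j, hj, rfl⟩ := hM
    exact isDiag_locM (fun he => hm2 (he ▸ hj))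

/-- affine generator factor -/
noncomputable def genF {n : ℕ} (a b : Fin n → ℂ) (i : Fin n) : QMat n :=
  a i • clGen n i + b i • 1

lemma trace_gen_prod_mul {n : ℕ} (a b : Fin n → ℂ) (t : List (Fin n)) :
    ∀ u : List (Fin n), u ≠ [] → (u ++ t).Nodup →
    ((u.map (clGen n)).prod * (t.map (genF a b)).prod).trace = 0 := by
  induction t with
  | nil =>
    intro u hu hnd
    rw [List.map_nil, List.prod_nil, mul_one]
    exact trace_prod_clGen u hu (by simpa using hnd)
  | cons j t' ih =>
    intro u hu hnd
    rw [List.map_cons, List.prod_cons]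
    have key : (u.map (clGen n)).prod * (genF a b j * (t'.map (genF a b)).prod)
        = a j • (((u ++ [j]).map (clGen n)).prod * (t'.map (genF a b)).prod)
          + b j • ((u.map (clGen n)).prod * (t'.map (genF a b)).prod) := by
      rw [List.map_append, List.prod_append, List.map_singleton, List.prod_singleton, genF]
      rw [add_mul, smul_mul_assoc, smul_mul_assoc, one_mul, mul_add, mul_smul_comm,
        mul_smul_comm, mul_assoc]
    rw [key, Matrix.trace_add, Matrix.trace_smul, Matrix.trace_smul]
    rw [ih (u ++ [j]) (by simp) (by simpa using hnd),
      ih u hu ((List.Sublist.append (List.Sublist.refl u)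
        (List.sublist_cons_self j t')).nodup hnd)]
    simp

lemma card_fun_two (n : ℕ) : Fintype.card (Fin n → Fin 2) = 2 ^ n := by
  simp

lemma trace_genF_prod {n : ℕ} (a b : Fin n → ℂ) (t : List (Fin n)) (hnd : t.Nodup) :
    ((t.map (genF a b)).prod).trace = (t.map b).prod * 2 ^ n := by
  induction t with
  | nil => simp [Matrix.trace_one, card_fun_two]
  | cons j t' ih =>
    rw [List.map_cons, List.prod_cons]
    have key : genF a b j * (t'.map (genF a b)).prod
        = a j • (([j].map (clGen n)).prod * (t'.map (genF a b)).prod)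
          + b j • (t'.map (genF a b)).prod := by
      rw [genF, List.map_singleton, List.prod_singleton]
      rw [add_mul, smul_mul_assoc, smul_mul_assoc, one_mul]
    rw [key, Matrix.trace_add, Matrix.trace_smul, Matrix.trace_smul]
    rw [trace_gen_prod_mul a b t' [j] (by simp) (by simpa using hnd),
      ih (List.nodup_cons.mp hnd).2]
    rw [List.map_cons, List.prod_cons]
    simp only [smul_eq_mul, mul_zero, zero_add]
    ring

/-- The projector `|Cl_n⟩⟨Cl_n| = 2^{-n} ∏_{i=1}^n (𝟙 + g_i)`. -/
noncomputable def clProj (n : ℕ) : QMat n :=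
  ((2 : ℂ) ^ n)⁻¹ • ((List.finRange n).map (fun i => 1 + clGen n i)).prod


lemma commute_gen_oneAdd {n : ℕ} (i j : Fin n) :
    Commute (clGen n i) (1 + clGen n j) :=
  (Commute.one_right _).add_right (clGen_comm i j)

lemma prod_oneAdd_mul_gen {n : ℕ} (l : List (Fin n)) (i : Fin n) (hi : i ∈ l) :
    ((l.map (fun j => 1 + clGen n j)).prod) * clGen n i
      = (l.map (fun j => 1 + clGen n j)).prod := by
  induction l with
  | nil => simp at hi
  | cons h t ih =>
    rw [List.map_cons, List.prod_cons]
    by_cases hit : i ∈ t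
    · rw [mul_assoc, ih hit]
    · have hih : i = h := by
        rcases List.mem_cons.mp hi with h' | h'
        · exact h'
        · exact absurd h' hit
      subst hih
      have hcomm : Commute (clGen n i) ((t.map (fun j => 1 + clGen n j)).prod) := by
        apply Commute.list_prod_right
        intro x hx
        rw [List.mem_map] at hx
        obtain ⟨j, _, rfl⟩ := hx
        exact commute_gen_oneAdd i j
      rw [mul_assoc, ← hcomm.eq, ← mul_assoc, add_mul, one_mul, clGen_sq, add_comm]

lemma clProj_mul_gen {n : ℕ} (i : Fin n) : clProj n * clGen n i = clProj n := by
  rw [clProj, smul_mul_assoc, prod_oneAdd_mul_gen _ i (List.mem_finRange i)]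

lemma clProj_mul_genF_prod {n : ℕ} (a b : Fin n → ℂ) (t : List (Fin n)) :
    clProj n * (t.map (genF a b)).prod = ((t.map (fun i => a i + b i)).prod) • clProj n := by
  induction t with
  | nil => simp
  | cons j t' ih =>
    rw [List.map_cons, List.prod_cons, ← mul_assoc]
    have : clProj n * genF a b j = (a j + b j) • clProj n := by
      rw [genF, mul_add, mul_smul_comm, mul_smul_comm, mul_one, clProj_mul_gen, add_smul]
    rw [this, smul_mul_assoc, ih, List.map_cons, List.prod_cons, smul_smul]

lemma two_pow_ne_zero' (n : ℕ) : ((2 : ℂ) ^ n) ≠ 0 := by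
  positivity

lemma clProj_idem {n : ℕ} : clProj n * clProj n = clProj n := by
  have e1 : ((List.finRange n).map (fun i => 1 + clGen n i)).prod
      = ((List.finRange n).map (genF (fun _ => (1 : ℂ)) (fun _ => (1 : ℂ)))).prod := by
    congr 1
    apply List.map_congr_left
    intro i _
    rw [genF, one_smul, one_smul, add_comm]
  nth_rewrite 2 [clProj]
  rw [mul_smul_comm, e1, clProj_mul_genF_prod]
  have e2 : ((List.finRange n).map (fun _ : Fin n => (1 : ℂ) + 1)).prod = 2 ^ n := by
    rw [List.map_const', List.prod_replicate, List.length_finRange]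
    norm_num
  rw [e2, smul_smul, inv_mul_cancel₀ (two_pow_ne_zero' n), one_smul]

lemma trace_clProj {n : ℕ} : (clProj n).trace = 1 := by
  have e1 : ((List.finRange n).map (fun i => 1 + clGen n i)).prod
      = ((List.finRange n).map (genF (fun _ => (1 : ℂ)) (fun _ => (1 : ℂ)))).prod := by
    congr 1
    apply List.map_congr_left
    intro i _
    rw [genF, one_smul, one_smul, add_comm]
  rw [clProj, Matrix.trace_smul, e1, trace_genF_prod _ _ _ (List.nodup_finRange n)]
  rw [List.map_const', List.prod_replicate, List.length_finRange, one_pow, one_mul]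
  simp [inv_mul_cancel₀ (two_pow_ne_zero' n)]

lemma count_mult3 : ∀ m : ℕ, ((Finset.range m).filter (fun i => i % 3 = 0)).card = (m + 2) / 3 := by
  intro m
  induction m with
  | zero => simp
  | succ m ih =>
    rw [Finset.range_add_one, Finset.filter_insert]
    by_cases h : m % 3 = 0
    · rw [if_pos h, Finset.card_insert_of_notMem (by simp), ih]
      omega
    · rw [if_neg h, ih]
      omega

lemma card_B (n : ℕ) :
    ((Finset.univ : Finset (Fin n)).filter (fun i : Fin n => (i : ℕ) % 3 = 0)).card = (n + 2) / 3 := by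
  rw [← count_mult3 n]
  rw [← Finset.card_image_of_injective
    ((Finset.univ : Finset (Fin n)).filter (fun i : Fin n => (i : ℕ) % 3 = 0)) Fin.val_injective]
  congr 1
  ext m
  simp only [Finset.mem_image, Finset.mem_filter, Finset.mem_univ, true_and, Finset.mem_range]
  constructor
  · rintro ⟨i, hi, rfl⟩
    exact ⟨i.isLt, hi⟩
  · rintro ⟨hm, h3⟩
    exact ⟨⟨m, hm⟩, h3, rfl⟩

lemma card_signs {n : ℕ} (B : Finset (Fin n)) :
    (Finset.univ.filter (fun s : Fin n → Bool =>
        (∀ i ∉ B, s i = false) ∧ 2 ≤ (B.filter (fun i => s i = true)).card)).card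
      = 2 ^ B.card - 1 - B.card := by
  classical
  have h2 : B.powerset.filter (fun S => ¬ 2 ≤ S.card)
      = B.powerset.filter (fun S => S.card = 0) ∪ B.powerset.filter (fun S => S.card = 1) := by
    ext S
    simp only [Finset.mem_union, Finset.mem_filter]
    constructor
    · rintro ⟨hp, hc⟩
      have : S.card = 0 ∨ S.card = 1 := by omega
      tauto
    · rintro (⟨hp, hc⟩ | ⟨hp, hc⟩) <;> exact ⟨hp, by omega⟩
  have h3 : (B.powerset.filter (fun S => ¬ 2 ≤ S.card)).card = 1 + B.card := by
    rw [h2, Finset.card_union_of_disjoint]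
    · rw [← Finset.powersetCard_eq_filter, ← Finset.powersetCard_eq_filter,
        Finset.card_powersetCard, Finset.card_powersetCard]
      simp [Nat.choose_one_right]
    · apply Finset.disjoint_left.mpr
      intro S hS1 hS2
      simp only [Finset.mem_filter] at hS1 hS2
      omega
  have h1 : (B.powerset.filter (fun S => 2 ≤ S.card)).card
      + (B.powerset.filter (fun S => ¬ 2 ≤ S.card)).card = 2 ^ B.card := by
    rw [Finset.card_filter_add_card_filter_not, Finset.card_powerset]
  have hcard : (Finset.univ.filter (fun s : Fin n → Bool =>
        (∀ i ∉ B, s i = false) ∧ 2 ≤ (B.filter (fun i => s i = true)).card)).card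
      = (B.powerset.filter (fun S => 2 ≤ S.card)).card := by
    apply Finset.card_bij' (fun s _ => B.filter (fun i => s i = true))
      (fun S _ => fun i => decide (i ∈ S))
    · intro s hs
      simp only [Finset.mem_filter, Finset.mem_univ, true_and] at hs
      simp only [Finset.mem_filter, Finset.mem_powerset]
      exact ⟨Finset.filter_subset _ _, hs.2⟩
    · intro S hS
      simp only [Finset.mem_filter, Finset.mem_powerset] at hS
      simp only [Finset.mem_filter, Finset.mem_univ, true_and]
      constructor
      · intro i hi
        simp only [decide_eq_false_iff_not]
        exact fun hiS => hi (hS.1 hiS)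
      · have : B.filter (fun i => decide (i ∈ S) = true) = S := by
          ext i
          simp only [Finset.mem_filter, decide_eq_true_eq]
          exact ⟨fun h => h.2, fun h => ⟨hS.1 h, h⟩⟩
        rw [this]; exact hS.2
    · intro s hs
      simp only [Finset.mem_filter, Finset.mem_univ, true_and] at hs
      funext i
      by_cases hiB : i ∈ B
      · by_cases hsi : s i = true
        · simp [Finset.mem_filter, hiB, hsi]
        · simp only [Bool.not_eq_true] at hsi
          simp [Finset.mem_filter, hsi]
      · simp [Finset.mem_filter, hiB, hs.1 i hiB]
    · intro S hS
      simp only [Finset.mem_filter, Finset.mem_powerset] at hS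
      ext i
      simp only [Finset.mem_filter, decide_eq_true_eq]
      exact ⟨fun h => h.2, fun h => ⟨hS.1 h, h⟩⟩
  rw [hcard]
  obtain ⟨x, hx⟩ : ∃ x, (B.powerset.filter (fun S => 2 ≤ S.card)).card = x := ⟨_, rfl⟩
  obtain ⟨y, hy⟩ : ∃ y, (B.powerset.filter (fun S => ¬ 2 ≤ S.card)).card = y := ⟨_, rfl⟩
  rw [hx, hy] at h1
  rw [hy] at h3
  rw [hx]
  clear hcard h2
  omega

/-- The witness `W_Cln = 𝟙/2 − |Cl_n⟩⟨Cl_n| − (1/2) Σ_s ∏_{i∈B} (s_i g_i + 𝟙)/2`, the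
sum running over sign vectors `s ∈ {±1}^B` with at least two entries `−1` (encoded as
`s : Fin n → Bool` supported on `B`, `true` standing for `−1`). -/
noncomputable def Wcl (n : ℕ) (B : Finset (Fin n)) : QMat n :=
  (2 : ℂ)⁻¹ • 1 - clProj n -
    (2 : ℂ)⁻¹ • ∑ s ∈ Finset.univ.filter (fun s : Fin n → Bool =>
        (∀ i ∉ B, s i = false) ∧ 2 ≤ (B.filter (fun i => s i = true)).card),
      ((B.sort (· ≤ ·)).map
        (fun i => (2 : ℂ)⁻¹ • ((if s i then (-1 : ℂ) else 1) • clGen n i + 1))).prod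

/-- The noisy cluster state `ρ(p) = (1−p)|Cl_n⟩⟨Cl_n| + p 2^{−n} 𝟙`. -/
noncomputable def rhoCl (n : ℕ) (p : ℝ) : QMat n :=
  ((1 - p : ℝ) : ℂ) • clProj n + ((p * ((2 : ℝ) ^ n)⁻¹ : ℝ) : ℂ) • 1

/-- for `n > 3`, `k = ⌊(n+2)/3⌋` and `B = {1, 4, …, 3k−2}` (the qubits
with index `≡ 1 mod 3`, i.e. `0`-indexed positions divisible by 3), one has
`tr(W_Cln ρ(p)) = −1/2 + p(1/2 − 2^{−n} + (k+1)2^{−k−1})`; in particular the expectation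
value is negative iff `p < p_tol = (1 − 2^{−n+1} + (k+1)2^{−k})⁻¹`. -/
theorem cluster_witness_trace_and_noise_tolerance
    (n : ℕ) (hn : 3 < n) (k : ℕ) (hk : k = (n + 2) / 3)
    (B : Finset (Fin n)) (hB : B = Finset.univ.filter (fun i : Fin n => (i : ℕ) % 3 = 0))
    (p : ℝ) (hp0 : 0 ≤ p) (hp1 : p ≤ 1) :
    (Wcl n B * rhoCl n p).trace
      = ((- (1 / 2) + p * (1 / 2 - ((2 : ℝ) ^ n)⁻¹
          + (k + 1) * ((2 : ℝ) ^ (k + 1))⁻¹) : ℝ) : ℂ) ∧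
    ((Wcl n B * rhoCl n p).trace < 0 ↔
      p < (1 - ((2 : ℝ) ^ (n - 1))⁻¹ + (k + 1) * ((2 : ℝ) ^ k)⁻¹)⁻¹) := by
  have hk2 : 2 ≤ k := by subst hk; omega
  have hkB : B.card = k := by rw [hB, card_B, hk]
  have htnd : (B.sort (· ≤ ·)).Nodup := B.sort_nodup _
  have htlen : (B.sort (· ≤ ·)).length = k := by rw [Finset.length_sort, hkB]
  set S := Finset.univ.filter (fun s : Fin n → Bool =>
      (∀ i ∉ B, s i = false) ∧ 2 ≤ (B.filter (fun i => s i = true)).card) with hS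
  have hQeq : ∀ s : Fin n → Bool,
      (((B.sort (· ≤ ·)).map
          (fun i => (2 : ℂ)⁻¹ • ((if s i then (-1 : ℂ) else 1) • clGen n i + 1))).prod)
      = ((B.sort (· ≤ ·)).map (genF (fun i => (2:ℂ)⁻¹ * (if s i then (-1:ℂ) else 1))
          (fun _ => (2:ℂ)⁻¹))).prod := by
    intro s; congr 1; apply List.map_congr_left; intro i _
    rw [genF, smul_add, smul_smul]
  have hQtr : ∀ s : Fin n → Bool,
      ((((B.sort (· ≤ ·)).map
          (fun i => (2 : ℂ)⁻¹ • ((if s i then (-1 : ℂ) else 1) • clGen n i + 1))).prod).trace)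
        = ((2:ℂ)⁻¹)^k * 2^n := by
    intro s
    rw [hQeq s, trace_genF_prod _ _ _ htnd, List.map_const', List.prod_replicate, htlen]
  have hQcl : ∀ s ∈ S,
      ((((B.sort (· ≤ ·)).map
          (fun i => (2 : ℂ)⁻¹ • ((if s i then (-1 : ℂ) else 1) • clGen n i + 1))).prod
        * clProj n).trace) = 0 := by
    intro s hs
    rw [hS, Finset.mem_filter] at hs
    obtain ⟨-, -, hs2⟩ := hs
    obtain ⟨i, hi⟩ := Finset.card_pos.mp (by omega : 0 < (B.filter (fun i => s i = true)).card)
    rw [Finset.mem_filter] at hi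
    rw [Matrix.trace_mul_comm, hQeq s, clProj_mul_genF_prod, Matrix.trace_smul, trace_clProj,
      smul_eq_mul, mul_one]
    apply List.prod_eq_zero
    rw [List.mem_map]
    refine ⟨i, (Finset.mem_sort _).mpr hi.1, ?_⟩
    rw [if_pos hi.2]
    ring
  have htr1 : (1 : QMat n).trace = 2 ^ n := by
    rw [Matrix.trace_one, card_fun_two]
    push_cast
    ring
  -- expansion of the trace
  have expand : (Wcl n B * rhoCl n p).trace
      = ((1 - p : ℝ) : ℂ) * ((2:ℂ)⁻¹ * (clProj n).trace - (clProj n * clProj n).trace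
          - (2:ℂ)⁻¹ * ∑ s ∈ S, ((((B.sort (· ≤ ·)).map
              (fun i => (2 : ℂ)⁻¹ • ((if s i then (-1 : ℂ) else 1) • clGen n i + 1))).prod
            * clProj n).trace))
        + ((p * ((2:ℝ)^n)⁻¹ : ℝ) : ℂ) * ((2:ℂ)⁻¹ * (1 : QMat n).trace - (clProj n).trace
          - (2:ℂ)⁻¹ * ∑ s ∈ S, ((((B.sort (· ≤ ·)).map
              (fun i => (2 : ℂ)⁻¹ • ((if s i then (-1 : ℂ) else 1) • clGen n i + 1))).prod).trace)) := by
    rw [Wcl, rhoCl, ← hS]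
    simp only [mul_add, sub_mul, add_mul, smul_mul_assoc, mul_smul_comm, Finset.sum_mul,
      one_mul, mul_one, Matrix.trace_add, Matrix.trace_sub, Matrix.trace_smul,
      Matrix.trace_sum, smul_eq_mul, Finset.mul_sum]
  have hNcast : (((2 ^ k - 1 - k : ℕ)) : ℂ) = 2 ^ k - 1 - k := by
    have h1 : k < 2 ^ k := Nat.lt_two_pow_self
    rw [Nat.cast_sub (by omega), Nat.cast_sub (by omega)]
    push_cast
    ring
  have hmain : (Wcl n B * rhoCl n p).trace
      = ((- (1 / 2) + p * (1 / 2 - ((2 : ℝ) ^ n)⁻¹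
          + (k + 1) * ((2 : ℝ) ^ (k + 1))⁻¹) : ℝ) : ℂ) := by
    rw [expand, trace_clProj, clProj_idem, trace_clProj, htr1,
      Finset.sum_congr rfl hQcl, Finset.sum_const_zero,
      Finset.sum_congr rfl (fun s _ => hQtr s), Finset.sum_const, hS, card_signs, hkB,
      nsmul_eq_mul, hNcast]
    have h2n : ((2:ℂ)^n) ≠ 0 := two_pow_ne_zero' n
    have h2k : ((2:ℂ)^k) ≠ 0 := two_pow_ne_zero' k
    push_cast
    simp only [inv_pow]
    field_simp
    ring
  refine ⟨hmain, ?_⟩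
  rw [hmain]
  rw [show ((0:ℂ)) = ((0:ℝ):ℂ) from rfl, Complex.real_lt_real]
  have hkpos : (0:ℝ) < (k + 1) * ((2 : ℝ) ^ (k + 1))⁻¹ := by positivity
  have h2le : ((2:ℝ)^n)⁻¹ ≤ 2⁻¹ := by
    apply inv_anti₀ (by norm_num)
    calc (2:ℝ) = 2^1 := (pow_one 2).symm
    _ ≤ 2^n := pow_le_pow_right₀ (by norm_num) (by omega)
  set c : ℝ := 1 / 2 - ((2 : ℝ) ^ n)⁻¹ + (k + 1) * ((2 : ℝ) ^ (k + 1))⁻¹ with hc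
  have hcpos : 0 < c := by rw [hc]; linarith
  clear_value c
  have hd : (1 - ((2 : ℝ) ^ (n - 1))⁻¹ + (k + 1) * ((2 : ℝ) ^ k)⁻¹) = 2 * c := by
    rw [hc]
    have e1 : (2:ℝ)^n = 2 * 2^(n-1) := by
      rw [← pow_succ']
      congr 1
      omega
    have e2 : (2:ℝ)^(k+1) = 2 * 2^k := by rw [pow_succ']
    rw [e1, e2]
    have h1 : ((2:ℝ)^(n-1)) ≠ 0 := by positivity
    have h2 : ((2:ℝ)^k) ≠ 0 := by positivity
    field_simp
  rw [hd]
  rw [show (2 * c)⁻¹ = 1 / (2 * c) from (one_div _).symm, lt_div_iff₀ (by linarith)]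
  have hme : p * (2 * c) = 2 * (p * c) := by ring
  rw [hme]
  constructor
  · intro h; linarith
  · intro h; linarith
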